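/- The chromatic number of G is exactly 4. -/

import Mathlib

open scoped RealInnerProductSpace

/-- The graph on the unit sphere in `ℝ³` where two unit vectors are adjacent
iff they are orthogonal. -/
def sphereGraph : SimpleGraph {x : EuclideanSpace ℝ (Fin 3) // ‖x‖ = 1} where
  Adj u v := ⟪(u : EuclideanSpace ℝ (Fin 3)), (v : EuclideanSpace ℝ (Fin 3))⟫ = 0
  symm := ⟨fun u v h => by rwa [real_inner_comm]⟩
  loopless := ⟨fun u h => by
    have : ⟪(u : EuclideanSpace ℝ (Fin 3)), (u : EuclideanSpace ℝ (Fin 3))⟫ = 1 := by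
      rw [real_inner_self_eq_norm_sq, u.2]; norm_num
    rw [h] at this
    exact one_ne_zero this.symm⟩

lemma inner_expand (a b : EuclideanSpace ℝ (Fin 3)) :
    ⟪a, b⟫ = a 0 * b 0 + a 1 * b 1 + a 2 * b 2 := by
  simp [PiLp.inner_apply, RCLike.inner_apply, Fin.sum_univ_three]; ring

section Upper

/-- canonical-representative predicate -/
def Pos (x : EuclideanSpace ℝ (Fin 3)) : Prop :=
  0 < x 2 ∨ (x 2 = 0 ∧ (0 < x 1 ∨ (x 1 = 0 ∧ 0 < x 0)))

open Classical in
/-- the 4-coloring of canonical representatives -/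
noncomputable def col (y : EuclideanSpace ℝ (Fin 3)) : Fin 4 :=
  if 0 < y 2 then
    if 0 ≤ y 0 then (if 0 ≤ y 1 then 0 else 3) else (if 0 ≤ y 1 then 1 else 2)
  else
    if 0 < y 1 then (if y 0 < 0 then 1 else 2) else 1

lemma colNe (y z : EuclideanSpace ℝ (Fin 3)) (hy : Pos y) (hz : Pos z)
    (hor : y 0 * z 0 + y 1 * z 1 + y 2 * z 2 = 0) : col y ≠ col z := by
  intro hc
  unfold col at hc
  rcases hy with hy2 | ⟨hy2, hy1 | ⟨hy1, hy0⟩⟩ <;>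
    rcases hz with hz2 | ⟨hz2, hz1 | ⟨hz1, hz0⟩⟩ <;>
      simp only [*, lt_self_iff_false, if_true, if_false, le_refl,
        mul_zero, zero_mul, add_zero, zero_add] at hc hor <;>
    first
      | (split_ifs at hc <;>
          first
            | exact absurd hc (by decide)
            | nlinarith [hor])
      | exact absurd hc (by decide)
      | nlinarith [hor]
lemma pos_or (x : EuclideanSpace ℝ (Fin 3)) (hx : x ≠ 0) : Pos x ∨ Pos (-x) := by
  have hneg : ∀ i : Fin 3, (-x) i = -(x i) := fun i => rfl
  rcases lt_trichotomy 0 (x 2) with h2 | h2 | h2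
  · exact Or.inl (Or.inl h2)
  · rcases lt_trichotomy 0 (x 1) with h1 | h1 | h1
    · exact Or.inl (Or.inr ⟨h2.symm, Or.inl h1⟩)
    · rcases lt_trichotomy 0 (x 0) with h0 | h0 | h0
      · exact Or.inl (Or.inr ⟨h2.symm, Or.inr ⟨h1.symm, h0⟩⟩)
      · exfalso; apply hx
        have : ∀ i : Fin 3, x i = 0 := by
          intro i; fin_cases i
          · exact h0.symm
          · exact h1.symm
          · exact h2.symm
        ext i; simpa using this i
      · refine Or.inr (Or.inr ⟨?_, Or.inr ⟨?_, ?_⟩⟩) <;>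
          rw [hneg] <;> [skip; skip; skip] <;> simp [← h2, ← h1] <;> linarith
    · refine Or.inr (Or.inr ⟨?_, Or.inl ?_⟩)
      · rw [hneg]; simp [← h2]
      · rw [hneg]; linarith
  · exact Or.inr (Or.inl (by rw [hneg]; linarith))

open Classical in
noncomputable def sphereColoring : sphereGraph.Coloring (Fin 4) :=
  SimpleGraph.Coloring.mk
    (fun v => col (if Pos v.1 then v.1 else -v.1))
    (by
      intro v u hadj
      have h : ⟪(v : EuclideanSpace ℝ (Fin 3)), (u : EuclideanSpace ℝ (Fin 3))⟫ = 0 := hadj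
      have hvne : (v : EuclideanSpace ℝ (Fin 3)) ≠ 0 := by
        intro h0; have := v.2; rw [h0] at this; simp at this
      have hune : (u : EuclideanSpace ℝ (Fin 3)) ≠ 0 := by
        intro h0; have := u.2; rw [h0] at this; simp at this
      have hsum : ∀ (a b : EuclideanSpace ℝ (Fin 3)), ⟪a, b⟫ = 0 →
          a 0 * b 0 + a 1 * b 1 + a 2 * b 2 = 0 := by
        intro a b hab; rw [← inner_expand]; exact hab
      split_ifs with hv hu hu
      · exact colNe _ _ hv hu (hsum _ _ h)
      · refine colNe _ _ hv ((pos_or _ hune).resolve_left hu) (hsum _ _ ?_)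
        rw [inner_neg_right, h, neg_zero]
      · refine colNe _ _ ((pos_or _ hvne).resolve_left hv) hu (hsum _ _ ?_)
        rw [inner_neg_left, h, neg_zero]
      · refine colNe _ _ ((pos_or _ hvne).resolve_left hv)
          ((pos_or _ hune).resolve_left hu) (hsum _ _ ?_)
        rw [inner_neg_left, inner_neg_right, h, neg_zero, neg_zero])

end Upper

section Lower

def M : Fin 13 → Fin 3 → ℝ :=
  ![![1,1,1], ![1,1,0], ![1,1,-1], ![1,0,1], ![1,0,0], ![1,0,-1],
    ![1,-1,1], ![1,-1,0], ![1,-1,-1], ![0,1,1], ![0,1,0], ![0,1,-1], ![0,0,1]]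

noncomputable def w (i : Fin 13) : EuclideanSpace ℝ (Fin 3) :=
  (WithLp.equiv 2 (Fin 3 → ℝ)).symm (M i)

lemma o_0_5 : ⟪w 0, w 5⟫ = 0 := by
  rw [inner_expand, show w 0 0 = (1:ℝ) from rfl, show w 0 1 = (1:ℝ) from rfl, show w 0 2 = (1:ℝ) from rfl, show w 5 0 = (1:ℝ) from rfl, show w 5 1 = (0:ℝ) from rfl, show w 5 2 = (-1:ℝ) from rfl]; norm_num

lemma o_0_7 : ⟪w 0, w 7⟫ = 0 := by
  rw [inner_expand, show w 0 0 = (1:ℝ) from rfl, show w 0 1 = (1:ℝ) from rfl, show w 0 2 = (1:ℝ) from rfl, show w 7 0 = (1:ℝ) from rfl, show w 7 1 = (-1:ℝ) from rfl, show w 7 2 = (0:ℝ) from rfl]; norm_num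

lemma o_0_11 : ⟪w 0, w 11⟫ = 0 := by
  rw [inner_expand, show w 0 0 = (1:ℝ) from rfl, show w 0 1 = (1:ℝ) from rfl, show w 0 2 = (1:ℝ) from rfl, show w 11 0 = (0:ℝ) from rfl, show w 11 1 = (1:ℝ) from rfl, show w 11 2 = (-1:ℝ) from rfl]; norm_num

lemma o_1_6 : ⟪w 1, w 6⟫ = 0 := by
  rw [inner_expand, show w 1 0 = (1:ℝ) from rfl, show w 1 1 = (1:ℝ) from rfl, show w 1 2 = (0:ℝ) from rfl, show w 6 0 = (1:ℝ) from rfl, show w 6 1 = (-1:ℝ) from rfl, show w 6 2 = (1:ℝ) from rfl]; norm_num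

lemma o_1_7 : ⟪w 1, w 7⟫ = 0 := by
  rw [inner_expand, show w 1 0 = (1:ℝ) from rfl, show w 1 1 = (1:ℝ) from rfl, show w 1 2 = (0:ℝ) from rfl, show w 7 0 = (1:ℝ) from rfl, show w 7 1 = (-1:ℝ) from rfl, show w 7 2 = (0:ℝ) from rfl]; norm_num

lemma o_1_8 : ⟪w 1, w 8⟫ = 0 := by
  rw [inner_expand, show w 1 0 = (1:ℝ) from rfl, show w 1 1 = (1:ℝ) from rfl, show w 1 2 = (0:ℝ) from rfl, show w 8 0 = (1:ℝ) from rfl, show w 8 1 = (-1:ℝ) from rfl, show w 8 2 = (-1:ℝ) from rfl]; norm_num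

lemma o_1_12 : ⟪w 1, w 12⟫ = 0 := by
  rw [inner_expand, show w 1 0 = (1:ℝ) from rfl, show w 1 1 = (1:ℝ) from rfl, show w 1 2 = (0:ℝ) from rfl, show w 12 0 = (0:ℝ) from rfl, show w 12 1 = (0:ℝ) from rfl, show w 12 2 = (1:ℝ) from rfl]; norm_num

lemma o_2_3 : ⟪w 2, w 3⟫ = 0 := by
  rw [inner_expand, show w 2 0 = (1:ℝ) from rfl, show w 2 1 = (1:ℝ) from rfl, show w 2 2 = (-1:ℝ) from rfl, show w 3 0 = (1:ℝ) from rfl, show w 3 1 = (0:ℝ) from rfl, show w 3 2 = (1:ℝ) from rfl]; norm_num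

lemma o_2_7 : ⟪w 2, w 7⟫ = 0 := by
  rw [inner_expand, show w 2 0 = (1:ℝ) from rfl, show w 2 1 = (1:ℝ) from rfl, show w 2 2 = (-1:ℝ) from rfl, show w 7 0 = (1:ℝ) from rfl, show w 7 1 = (-1:ℝ) from rfl, show w 7 2 = (0:ℝ) from rfl]; norm_num

lemma o_2_9 : ⟪w 2, w 9⟫ = 0 := by
  rw [inner_expand, show w 2 0 = (1:ℝ) from rfl, show w 2 1 = (1:ℝ) from rfl, show w 2 2 = (-1:ℝ) from rfl, show w 9 0 = (0:ℝ) from rfl, show w 9 1 = (1:ℝ) from rfl, show w 9 2 = (1:ℝ) from rfl]; norm_num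

lemma o_3_5 : ⟪w 3, w 5⟫ = 0 := by
  rw [inner_expand, show w 3 0 = (1:ℝ) from rfl, show w 3 1 = (0:ℝ) from rfl, show w 3 2 = (1:ℝ) from rfl, show w 5 0 = (1:ℝ) from rfl, show w 5 1 = (0:ℝ) from rfl, show w 5 2 = (-1:ℝ) from rfl]; norm_num

lemma o_3_8 : ⟪w 3, w 8⟫ = 0 := by
  rw [inner_expand, show w 3 0 = (1:ℝ) from rfl, show w 3 1 = (0:ℝ) from rfl, show w 3 2 = (1:ℝ) from rfl, show w 8 0 = (1:ℝ) from rfl, show w 8 1 = (-1:ℝ) from rfl, show w 8 2 = (-1:ℝ) from rfl]; norm_num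

lemma o_3_10 : ⟪w 3, w 10⟫ = 0 := by
  rw [inner_expand, show w 3 0 = (1:ℝ) from rfl, show w 3 1 = (0:ℝ) from rfl, show w 3 2 = (1:ℝ) from rfl, show w 10 0 = (0:ℝ) from rfl, show w 10 1 = (1:ℝ) from rfl, show w 10 2 = (0:ℝ) from rfl]; norm_num

lemma o_4_9 : ⟪w 4, w 9⟫ = 0 := by
  rw [inner_expand, show w 4 0 = (1:ℝ) from rfl, show w 4 1 = (0:ℝ) from rfl, show w 4 2 = (0:ℝ) from rfl, show w 9 0 = (0:ℝ) from rfl, show w 9 1 = (1:ℝ) from rfl, show w 9 2 = (1:ℝ) from rfl]; norm_num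

lemma o_4_10 : ⟪w 4, w 10⟫ = 0 := by
  rw [inner_expand, show w 4 0 = (1:ℝ) from rfl, show w 4 1 = (0:ℝ) from rfl, show w 4 2 = (0:ℝ) from rfl, show w 10 0 = (0:ℝ) from rfl, show w 10 1 = (1:ℝ) from rfl, show w 10 2 = (0:ℝ) from rfl]; norm_num

lemma o_4_11 : ⟪w 4, w 11⟫ = 0 := by
  rw [inner_expand, show w 4 0 = (1:ℝ) from rfl, show w 4 1 = (0:ℝ) from rfl, show w 4 2 = (0:ℝ) from rfl, show w 11 0 = (0:ℝ) from rfl, show w 11 1 = (1:ℝ) from rfl, show w 11 2 = (-1:ℝ) from rfl]; norm_num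

lemma o_4_12 : ⟪w 4, w 12⟫ = 0 := by
  rw [inner_expand, show w 4 0 = (1:ℝ) from rfl, show w 4 1 = (0:ℝ) from rfl, show w 4 2 = (0:ℝ) from rfl, show w 12 0 = (0:ℝ) from rfl, show w 12 1 = (0:ℝ) from rfl, show w 12 2 = (1:ℝ) from rfl]; norm_num

lemma o_5_6 : ⟪w 5, w 6⟫ = 0 := by
  rw [inner_expand, show w 5 0 = (1:ℝ) from rfl, show w 5 1 = (0:ℝ) from rfl, show w 5 2 = (-1:ℝ) from rfl, show w 6 0 = (1:ℝ) from rfl, show w 6 1 = (-1:ℝ) from rfl, show w 6 2 = (1:ℝ) from rfl]; norm_num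

lemma o_5_10 : ⟪w 5, w 10⟫ = 0 := by
  rw [inner_expand, show w 5 0 = (1:ℝ) from rfl, show w 5 1 = (0:ℝ) from rfl, show w 5 2 = (-1:ℝ) from rfl, show w 10 0 = (0:ℝ) from rfl, show w 10 1 = (1:ℝ) from rfl, show w 10 2 = (0:ℝ) from rfl]; norm_num

lemma o_6_9 : ⟪w 6, w 9⟫ = 0 := by
  rw [inner_expand, show w 6 0 = (1:ℝ) from rfl, show w 6 1 = (-1:ℝ) from rfl, show w 6 2 = (1:ℝ) from rfl, show w 9 0 = (0:ℝ) from rfl, show w 9 1 = (1:ℝ) from rfl, show w 9 2 = (1:ℝ) from rfl]; norm_num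

lemma o_7_12 : ⟪w 7, w 12⟫ = 0 := by
  rw [inner_expand, show w 7 0 = (1:ℝ) from rfl, show w 7 1 = (-1:ℝ) from rfl, show w 7 2 = (0:ℝ) from rfl, show w 12 0 = (0:ℝ) from rfl, show w 12 1 = (0:ℝ) from rfl, show w 12 2 = (1:ℝ) from rfl]; norm_num

lemma o_8_11 : ⟪w 8, w 11⟫ = 0 := by
  rw [inner_expand, show w 8 0 = (1:ℝ) from rfl, show w 8 1 = (-1:ℝ) from rfl, show w 8 2 = (-1:ℝ) from rfl, show w 11 0 = (0:ℝ) from rfl, show w 11 1 = (1:ℝ) from rfl, show w 11 2 = (-1:ℝ) from rfl]; norm_num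

lemma o_9_11 : ⟪w 9, w 11⟫ = 0 := by
  rw [inner_expand, show w 9 0 = (0:ℝ) from rfl, show w 9 1 = (1:ℝ) from rfl, show w 9 2 = (1:ℝ) from rfl, show w 11 0 = (0:ℝ) from rfl, show w 11 1 = (1:ℝ) from rfl, show w 11 2 = (-1:ℝ) from rfl]; norm_num

lemma o_10_12 : ⟪w 10, w 12⟫ = 0 := by
  rw [inner_expand, show w 10 0 = (0:ℝ) from rfl, show w 10 1 = (1:ℝ) from rfl, show w 10 2 = (0:ℝ) from rfl, show w 12 0 = (0:ℝ) from rfl, show w 12 1 = (0:ℝ) from rfl, show w 12 2 = (1:ℝ) from rfl]; norm_num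



lemma w_ne (i : Fin 13) : w i ≠ 0 := by
  fin_cases i <;> intro h0 <;>
    first
      | exact one_ne_zero (show (1:ℝ) = 0 from congrArg (fun v : EuclideanSpace ℝ (Fin 3) => v 0) h0)
      | exact one_ne_zero (show (1:ℝ) = 0 from congrArg (fun v : EuclideanSpace ℝ (Fin 3) => v 1) h0)
      | exact one_ne_zero (show (1:ℝ) = 0 from congrArg (fun v : EuclideanSpace ℝ (Fin 3) => v 2) h0)

noncomputable def u (i : Fin 13) : EuclideanSpace ℝ (Fin 3) := ‖w i‖⁻¹ • w i

lemma u_unit (i : Fin 13) : ‖u i‖ = 1 := by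
  rw [u, norm_smul, norm_inv, norm_norm,
    inv_mul_cancel₀ (norm_ne_zero_iff.mpr (w_ne i))]

lemma u_orth {a b : Fin 13} (h : ⟪w a, w b⟫ = 0) : ⟪u a, u b⟫ = 0 := by
  rw [u, u, real_inner_smul_left, real_inner_smul_right, h, mul_zero, mul_zero]

set_option maxHeartbeats 4000000 in
set_option synthInstance.maxHeartbeats 1000000 in
set_option synthInstance.maxSize 2000 in
lemma key : ∀ c1 c7 c0 c5 c3 c2 c6 c9 c11 c8 : Fin 3,
   ¬(c1 ≠ 2 ∧ c1 ≠ c7 ∧ c7 ≠ 2 ∧ c0 ≠ c7 ∧ c0 ≠ c5 ∧ c5 ≠ 1 ∧ c3 ≠ c5 ∧ c3 ≠ 1 ∧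
     c2 ≠ c3 ∧ c2 ≠ c7 ∧ c1 ≠ c6 ∧ c5 ≠ c6 ∧ c2 ≠ c9 ∧ (0:Fin 3) ≠ c9 ∧ c6 ≠ c9 ∧
     c0 ≠ c11 ∧ (0:Fin 3) ≠ c11 ∧ c9 ≠ c11 ∧ c1 ≠ c8 ∧ c3 ≠ c8 ∧ c8 ≠ c11) := by
  decide

lemma sInj : ∀ a b : Fin 3, a ≠ b →
    Function.Injective (fun x => if x = a then (0:Fin 3) else if x = b then 1 else 2) := by
  decide

lemma not_colorable_three : ¬ sphereGraph.Colorable 3 := by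
  rintro ⟨C⟩
  set c : Fin 13 → Fin 3 := fun i => C ⟨u i, u_unit i⟩ with hc
  have hedge : ∀ a b : Fin 13, ⟪w a, w b⟫ = 0 → c a ≠ c b := by
    intro a b hab
    exact C.valid (show sphereGraph.Adj ⟨u a, u_unit a⟩ ⟨u b, u_unit b⟩ from u_orth hab)
  have d410 : c 4 ≠ c 10 := hedge 4 10 o_4_10
  have d412 : c 4 ≠ c 12 := hedge 4 12 o_4_12
  have d1012 : c 10 ≠ c 12 := hedge 10 12 o_10_12
  set s : Fin 3 → Fin 3 := fun x => if x = c 4 then 0 else if x = c 10 then 1 else 2 with hs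
  have hsi : Function.Injective s := sInj (c 4) (c 10) d410
  set c' : Fin 13 → Fin 3 := fun i => s (c i) with hc'
  have hedge' : ∀ a b : Fin 13, ⟪w a, w b⟫ = 0 → c' a ≠ c' b :=
    fun a b hab hq => hedge a b hab (hsi hq)
  have hc4 : c' 4 = 0 := by simp [hc', hs]
  have hc10 : c' 10 = 1 := by simp [hc', hs, d410.symm]
  have hc12 : c' 12 = 2 := by simp [hc', hs, d412.symm, d1012.symm]
  exact key (c' 1) (c' 7) (c' 0) (c' 5) (c' 3) (c' 2) (c' 6) (c' 9) (c' 11) (c' 8)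
    ⟨hc12 ▸ hedge' 1 12 o_1_12, hedge' 1 7 o_1_7, hc12 ▸ hedge' 7 12 o_7_12, hedge' 0 7 o_0_7, hedge' 0 5 o_0_5, hc10 ▸ hedge' 5 10 o_5_10, hedge' 3 5 o_3_5, hc10 ▸ hedge' 3 10 o_3_10, hedge' 2 3 o_2_3, hedge' 2 7 o_2_7, hedge' 1 6 o_1_6, hedge' 5 6 o_5_6, hedge' 2 9 o_2_9, hc4 ▸ hedge' 4 9 o_4_9, hedge' 6 9 o_6_9, hedge' 0 11 o_0_11, hc4 ▸ hedge' 4 11 o_4_11, hedge' 9 11 o_9_11, hedge' 1 8 o_1_8, hedge' 3 8 o_3_8, hedge' 8 11 o_8_11⟩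

end Lower

theorem sphereGraph_chromaticNumber : sphereGraph.chromaticNumber = 4 := by
  have h4 : sphereGraph.Colorable 4 := ⟨sphereColoring⟩
  have hle : sphereGraph.chromaticNumber ≤ 4 := by
    exact_mod_cast h4.chromaticNumber_le
  have hge : 4 ≤ sphereGraph.chromaticNumber := by
    by_contra hlt
    push_neg at hlt
    have h3 : sphereGraph.chromaticNumber ≤ ((3:ℕ):ℕ∞) := by
      refine Order.le_of_lt_add_one ?_
      have : ((3:ℕ):ℕ∞) + 1 = 4 := by norm_num
      rw [this]
      exact hlt
    exact not_colorable_three (SimpleGraph.chromaticNumber_le_iff_colorable.mp h3)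
  exact le_antisymm hle hge
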